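/- Let J ⊂ ℝ be a compact interval, c an endpoint of J, and f ∈ C^∞(J) pliable at c, with pliable series f = Σ_{k ≥ k₀} c_k g_k. Then for every integer r ≥ 0 the partial sums Σ_{k=k₀}^{l} c_k g_k converge to f in the norm ‖·‖_{C^r(J)} as l → ∞. -/

import Mathlib

open Set Filter Topology

noncomputable section

/-- The `C^r` norm `‖f‖_{C^r(J)} = ∑_{i=0}^{r} max_J |f^{(i)}|` of a function on a set
`J ⊆ ℝ` (derivatives taken within `J`). -/
def CrNorm (r : ℕ) (f : ℝ → ℝ) (J : Set ℝ) : ℝ :=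
  ∑ i ∈ Finset.range (r + 1), ⨆ x : J, |iteratedDerivWithin i f J (x : ℝ)|

/-- The support of `g` relative to the interval `[a,b]`: the closure of the set of points
of `[a,b]` where `g` is nonzero. -/
def suppOn (a b : ℝ) (g : ℝ → ℝ) : Set ℝ :=
  closure {x | x ∈ Set.Icc a b ∧ g x ≠ 0}

/-- The data `(k₀, cs, g)` is a series witnessing that `f` is pliable at the endpoint `c`
of the interval `[a,b]`:
* `f = Σ_{k ≥ k₀} cs k • g k` pointwise on `[a,b]`;
* the `cs k` are positive and super-exponentially converge to `0`;
* the `g k` are `C^∞` on `[a,b]`, their supports form a locally finite family of compact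
  subsets of `[a,b] ∖ {c}`, and for every `r` the `C^r` norms of `g k` grow at most
  exponentially in `k`;
* there is `L > 0` such that whenever `0 < 2ε < b - a`, the set `J_ε` of indices `k ≥ k₀`
  whose support meets `{x ∈ [a,b] : ε ≤ |x - c| ≤ 2ε}` has at most `L` elements, and
  `2^{-kL} ≤ ε` for every `k ∈ J_ε`. -/
structure IsPliableSeries (a b c : ℝ) (f : ℝ → ℝ) (k₀ : ℤ) (cs : ℤ → ℝ)
    (g : ℤ → ℝ → ℝ) : Prop where
  sum_eq : ∀ x ∈ Set.Icc a b,
    HasSum (fun k : {k : ℤ // k₀ ≤ k} => cs k.val * g k.val x) (f x)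
  cs_pos : ∀ k : ℤ, k₀ ≤ k → 0 < cs k
  cs_superexp : ∀ γ : ℝ,
    Tendsto (fun k : ℤ => (2 : ℝ) ^ (γ * (k : ℝ)) * cs k) atTop (𝓝 0)
  g_smooth : ∀ k : ℤ, k₀ ≤ k → ContDiffOn ℝ (⊤ : ℕ∞) (g k) (Set.Icc a b)
  supp_compact : ∀ k : ℤ, k₀ ≤ k → IsCompact (suppOn a b (g k))
  supp_subset : ∀ k : ℤ, k₀ ≤ k → suppOn a b (g k) ⊆ Set.Icc a b \ {c}
  supp_locFin : ∀ x ∈ Set.Icc a b \ {c}, ∃ U ∈ 𝓝 x,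
    {k : ℤ | k₀ ≤ k ∧ (suppOn a b (g k) ∩ U).Nonempty}.Finite
  norm_growth : ∀ r : ℕ, ∃ γ M : ℝ, ∀ k : ℤ, k₀ ≤ k →
    (2 : ℝ) ^ (γ * (k : ℝ)) * CrNorm r (g k) (Set.Icc a b) ≤ M
  index_bound : ∃ L : ℕ, 0 < L ∧ ∀ ε : ℝ, 0 < ε → 2 * ε < b - a →
    {k : ℤ | k₀ ≤ k ∧ (suppOn a b (g k) ∩
      {x ∈ Set.Icc a b | ε ≤ |x - c| ∧ |x - c| ≤ 2 * ε}).Nonempty}.Finite ∧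
    {k : ℤ | k₀ ≤ k ∧ (suppOn a b (g k) ∩
      {x ∈ Set.Icc a b | ε ≤ |x - c| ∧ |x - c| ≤ 2 * ε}).Nonempty}.ncard ≤ L ∧
    ∀ k : ℤ, k₀ ≤ k →
      (suppOn a b (g k) ∩ {x ∈ Set.Icc a b | ε ≤ |x - c| ∧ |x - c| ≤ 2 * ε}).Nonempty →
      (2 : ℝ) ^ (-(k : ℝ) * (L : ℝ)) ≤ ε

/-- `f` is pliable at the endpoint `c` of `[a,b]`. -/
def Pliable (a b c : ℝ) (f : ℝ → ℝ) : Prop :=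
  ∃ (k₀ : ℤ) (cs : ℤ → ℝ) (g : ℤ → ℝ → ℝ), IsPliableSeries a b c f k₀ cs g

-- aux 1: eventuallyEq congruence for iteratedDerivWithin
theorem aux_iDW_congr {n : ℕ} {f₁ f : ℝ → ℝ} {s : Set ℝ} {x : ℝ}
    (h : f₁ =ᶠ[𝓝[s] x] f) (hx : f₁ x = f x) :
    iteratedDerivWithin n f₁ s x = iteratedDerivWithin n f s x := by
  simp only [iteratedDerivWithin_eq_iteratedFDerivWithin, h.iteratedFDerivWithin_eq hx n]

-- aux 2: iteratedDerivWithin of a finite sum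
theorem aux_iDW_sum {ι : Type*} {n : ℕ} {s : Set ℝ} (hs : UniqueDiffOn ℝ s) {x : ℝ}
    (hx : x ∈ s) (T : Finset ι) (F : ι → ℝ → ℝ)
    (hF : ∀ k ∈ T, ContDiffOn ℝ n (F k) s) :
    iteratedDerivWithin n (fun y => ∑ k ∈ T, F k y) s x
      = ∑ k ∈ T, iteratedDerivWithin n (F k) s x := by
  classical
  induction T using Finset.cons_induction with
  | empty =>
    simp only [Finset.sum_empty]
    simp [iteratedDerivWithin_eq_iteratedFDerivWithin, iteratedFDerivWithin_zero_fun]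
  | cons a T ha ih =>
    have h1 : ContDiffOn ℝ n (F a) s := hF a (Finset.mem_cons_self a T)
    have h2 : ContDiffOn ℝ n (fun y => ∑ k ∈ T, F k y) s :=
      ContDiffOn.sum fun k hk => hF k (Finset.mem_cons_of_mem hk)
    have : (fun y => ∑ k ∈ Finset.cons a T ha, F k y)
        = F a + fun y => ∑ k ∈ T, F k y := by
      funext y; rw [Finset.sum_cons]; rfl
    rw [this, iteratedDerivWithin_add hx hs (h1 x hx) (h2 x hx), Finset.sum_cons,
      ih fun k hk => hF k (Finset.mem_cons_of_mem hk)]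

-- aux 3: HasSum with finitely many nonzero terms
theorem aux_hasSum_finset {k₀ : ℤ} {ψ : ℤ → ℝ} {S : ℝ}
    (h : HasSum (fun k : {k : ℤ // k₀ ≤ k} => ψ k.val) S) (T : Finset ℤ)
    (hT : ∀ k : ℤ, k₀ ≤ k → ψ k ≠ 0 → k ∈ T) :
    S = ∑ k ∈ T.filter (fun k => k₀ ≤ k), ψ k := by
  classical
  have h2 : HasSum (fun k : {k : ℤ // k₀ ≤ k} => ψ k.val)
      (∑ k ∈ T.subtype (fun k => k₀ ≤ k), ψ k.val) := by
    apply hasSum_sum_of_ne_finset_zero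
    intro b hb
    by_contra hne
    exact hb (Finset.mem_subtype.2 (hT b.1 b.2 hne))
  rw [h.unique h2, ← Finset.sum_subtype_eq_sum_filter]

-- aux 4: pointwise bound by CrNorm
theorem aux_le_CrNorm {a b : ℝ} (hab : a < b) {r i : ℕ} (hi : i ≤ r) {h : ℝ → ℝ}
    (hsm : ContDiffOn ℝ (⊤ : ℕ∞) h (Set.Icc a b)) {x : ℝ} (hx : x ∈ Set.Icc a b) :
    |iteratedDerivWithin i h (Set.Icc a b) x| ≤ CrNorm r h (Set.Icc a b) := by
  have hJ : UniqueDiffOn ℝ (Set.Icc a b) := uniqueDiffOn_Icc hab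
  have hcont : ContinuousOn (iteratedDerivWithin i h (Set.Icc a b)) (Set.Icc a b) :=
    hsm.continuousOn_iteratedDerivWithin (by exact_mod_cast le_top) hJ
  have hbdd : BddAbove (Set.range fun y : Set.Icc a b =>
      |iteratedDerivWithin i h (Set.Icc a b) (y : ℝ)|) := by
    have heq : (Set.range fun y : Set.Icc a b =>
        |iteratedDerivWithin i h (Set.Icc a b) (y : ℝ)|)
        = (fun z => |iteratedDerivWithin i h (Set.Icc a b) z|) '' (Set.Icc a b) :=
      (Set.image_eq_range (fun z => |iteratedDerivWithin i h (Set.Icc a b) z|) (Set.Icc a b)).symm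
    rw [heq]
    exact (isCompact_Icc.image_of_continuousOn (hcont.abs)).bddAbove
  have h1 : |iteratedDerivWithin i h (Set.Icc a b) x|
      ≤ ⨆ y : Set.Icc a b, |iteratedDerivWithin i h (Set.Icc a b) (y : ℝ)| :=
    le_ciSup hbdd ⟨x, hx⟩
  refine h1.trans ?_
  apply Finset.single_le_sum (f := fun j => ⨆ y : Set.Icc a b,
    |iteratedDerivWithin j h (Set.Icc a b) (y : ℝ)|)
    (fun j _ => Real.iSup_nonneg fun y => abs_nonneg _)
  simpa using Nat.lt_succ_of_le hi

/-- Lemma 4.1(a) of the paper. The partial sums of a pliable series of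
`f` converge to `f` in every `C^r` norm on `J = [a,b]`. -/
theorem stmt10 (a b c : ℝ) (hab : a < b) (hc : c = a ∨ c = b)
    (f : ℝ → ℝ) (hfsm : ContDiffOn ℝ (⊤ : ℕ∞) f (Set.Icc a b))
    (k₀ : ℤ) (cs : ℤ → ℝ) (g : ℤ → ℝ → ℝ)
    (hf : IsPliableSeries a b c f k₀ cs g) :
    ∀ r : ℕ,
      Tendsto (fun l : ℤ =>
          CrNorm r (fun x => f x - ∑ k ∈ Finset.Icc k₀ l, cs k * g k x) (Set.Icc a b))
        atTop (𝓝 0) := by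
  classical
  have hJ : UniqueDiffOn ℝ (Set.Icc a b) := uniqueDiffOn_Icc hab
  haveI : Nonempty (Set.Icc a b) := ⟨⟨a, Set.left_mem_Icc.2 hab.le⟩⟩
  have hcmem : c ∈ Set.Icc a b := by
    rcases hc with rfl | rfl
    exacts [Set.left_mem_Icc.2 hab.le, Set.right_mem_Icc.2 hab.le]
  intro r
  obtain ⟨L, hLpos, hLspec⟩ := hf.index_bound
  have hLpos' : (0:ℝ) < (L:ℝ) := by exact_mod_cast hLpos
  set M : ℤ → ℝ := fun k => cs k * CrNorm r (g k) (Set.Icc a b) with hMdef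
  have hCrnonneg : ∀ h : ℝ → ℝ, 0 ≤ CrNorm r h (Set.Icc a b) := fun h =>
    Finset.sum_nonneg fun i _ => Real.iSup_nonneg fun y => abs_nonneg _
  have hM0 : ∀ k, k₀ ≤ k → 0 ≤ M k := fun k hk =>
    mul_nonneg (hf.cs_pos k hk).le (hCrnonneg _)
  have hMtend : Tendsto M atTop (𝓝 0) := by
    obtain ⟨γ, C, hγ⟩ := hf.norm_growth r
    have h1 : Tendsto (fun k : ℤ => C * ((2:ℝ) ^ (-γ * (k:ℝ)) * cs k)) atTop (𝓝 (C * 0)) :=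
      (hf.cs_superexp (-γ)).const_mul C
    rw [mul_zero] at h1
    apply tendsto_of_tendsto_of_tendsto_of_le_of_le' tendsto_const_nhds h1
    · filter_upwards [eventually_ge_atTop k₀] with k hk using hM0 k hk
    · filter_upwards [eventually_ge_atTop k₀] with k hk
      have h2 : (2:ℝ) ^ (γ * (k:ℝ)) * CrNorm r (g k) (Set.Icc a b) ≤ C := hγ k hk
      have h4 := mul_le_mul_of_nonneg_left h2
        (Real.rpow_nonneg (by norm_num : (0:ℝ) ≤ 2) (-γ * (k:ℝ)))
      rw [← mul_assoc, ← Real.rpow_add (by norm_num : (0:ℝ) < 2)] at h4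
      have he : -γ * (k:ℝ) + γ * (k:ℝ) = 0 := by ring
      rw [he, Real.rpow_zero, one_mul] at h4
      have h5 : M k ≤ cs k * ((2:ℝ) ^ (-γ * (k:ℝ)) * C) :=
        mul_le_mul_of_nonneg_left h4 (hf.cs_pos k hk).le
      calc M k ≤ cs k * ((2:ℝ) ^ (-γ * (k:ℝ)) * C) := h5
        _ = C * ((2:ℝ) ^ (-γ * (k:ℝ)) * cs k) := by ring
  have key : ∀ δ : ℝ, 0 < δ → ∃ N : ℤ, ∀ l, N ≤ l →
      CrNorm r (fun x => f x - ∑ k ∈ Finset.Icc k₀ l, cs k * g k x) (Set.Icc a b) ≤ δ := by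
    intro δ hδ
    set Q : ℝ := ((r:ℝ) + 1) * (2*(L:ℝ) + 1) with hQdef
    have hQpos : 0 < Q := by positivity
    set δ' : ℝ := δ / Q with hδ'def
    have hδ'pos : 0 < δ' := div_pos hδ hQpos
    obtain ⟨K, hK⟩ := Metric.tendsto_atTop.mp hMtend δ' hδ'pos
    have hKle : ∀ k : ℤ, K ≤ k → M k ≤ δ' := by
      intro k hk
      have := hK k hk
      rw [Real.dist_eq, sub_zero] at this
      exact (le_abs_self _).trans this.le
    set ε₀ : ℝ := min ((2:ℝ) ^ (-(K:ℝ) * (L:ℝ))) ((b - a) / 4) with hε₀def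
    have hε₀pos : 0 < ε₀ :=
      lt_min (Real.rpow_pos_of_pos (by norm_num) _) (by linarith)
    have hε₀le1 : ε₀ ≤ (2:ℝ) ^ (-(K:ℝ) * (L:ℝ)) := min_le_left _ _
    have hε₀le2 : ε₀ ≤ (b - a) / 4 := min_le_right _ _
    set Kf : Set ℝ := {y ∈ Set.Icc a b | ε₀ / 2 ≤ |y - c|} with hKfdef
    set Far : Set ℤ := {k | k₀ ≤ k ∧ (suppOn a b (g k) ∩ Kf).Nonempty} with hFardef
    have hfinfar : Far.Finite := by
      have hcmp : IsCompact Kf := by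
        have : Kf = Set.Icc a b ∩ {y | ε₀ / 2 ≤ |y - c|} := rfl
        rw [this]
        exact isCompact_Icc.inter_right
          (isClosed_le continuous_const ((continuous_id.sub continuous_const).abs))
      have hsub2 : Kf ⊆ Set.Icc a b \ {c} := by
        rintro y ⟨hy1, hy2⟩
        refine ⟨hy1, fun hyc => ?_⟩
        rw [Set.mem_singleton_iff] at hyc
        subst hyc
        rw [sub_self, abs_zero] at hy2
        linarith
      choose U hU hUfin using fun y (hy : y ∈ Kf) => hf.supp_locFin y (hsub2 hy)
      obtain ⟨t, ht⟩ := hcmp.elim_nhds_subcover' U hU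
      refine Set.Finite.subset (Set.Finite.biUnion t.finite_toSet fun y _ => hUfin y y.2) ?_
      rintro k ⟨hk1, z, hz1, hz2⟩
      have hz3 := ht hz2
      simp only [Set.mem_iUnion] at hz3
      obtain ⟨y, hyt, hzU⟩ := hz3
      exact Set.mem_biUnion hyt ⟨hk1, z, hz1, hzU⟩
    obtain ⟨N₀, hN₀⟩ : ∃ N₀ : ℤ, ∀ k ∈ Far, k ≤ N₀ := by
      obtain ⟨N₀, hN₀⟩ := hfinfar.bddAbove
      exact ⟨N₀, fun k hk => hN₀ hk⟩
    refine ⟨max N₀ k₀, fun l hl => ?_⟩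
    have hlN₀ : N₀ ≤ l := (le_max_left _ _).trans hl
    set h_l : ℝ → ℝ := fun x => f x - ∑ k ∈ Finset.Icc k₀ l, cs k * g k x with hhl
    have hsml : ContDiffOn ℝ (⊤ : ℕ∞) h_l (Set.Icc a b) :=
      hfsm.sub (ContDiffOn.sum fun k hk =>
        contDiffOn_const.mul (hf.g_smooth k (Finset.mem_Icc.1 hk).1))
    have hBnn : (0:ℝ) ≤ 2 * (L:ℝ) * δ' := by positivity
    -- pointwise bound away from c
    have hptne : ∀ i, i ≤ r → ∀ x ∈ Set.Icc a b, x ≠ c →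
        |iteratedDerivWithin i h_l (Set.Icc a b) x| ≤ 2 * (L:ℝ) * δ' := by
      intro i hi x hx hxc
      by_cases hfar : ε₀ ≤ |x - c|
      · -- far case: h_l vanishes near x
        have hval : ∀ y, ε₀ / 2 < |y - c| → y ∈ Set.Icc a b → h_l y = 0 := by
          intro y hy1 hy2
          have hfy := aux_hasSum_finset (ψ := fun k => cs k * g k y)
            (hf.sum_eq y hy2) (Finset.Icc k₀ l) ?_
          · have hft : (Finset.Icc k₀ l).filter (fun k => k₀ ≤ k) = Finset.Icc k₀ l :=
              Finset.filter_true_of_mem fun k hk => (Finset.mem_Icc.1 hk).1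
            show f y - ∑ k ∈ Finset.Icc k₀ l, cs k * g k y = 0
            rw [hfy, hft, sub_self]
          · intro k hk hne
            have hne' : g k y ≠ 0 := fun h0 => hne (by simp [h0])
            have hy3 : y ∈ suppOn a b (g k) := subset_closure ⟨hy2, hne'⟩
            have hkfar : k ∈ Far := ⟨hk, y, hy3, hy2, hy1.le⟩
            exact Finset.mem_Icc.2 ⟨hk, (hN₀ k hkfar).trans hlN₀⟩
        have hopen : IsOpen {y : ℝ | ε₀ / 2 < |y - c|} :=
          isOpen_lt continuous_const ((continuous_id.sub continuous_const).abs)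
        have hxin : x ∈ {y : ℝ | ε₀ / 2 < |y - c|} := lt_of_lt_of_le (by linarith) hfar
        have hev : h_l =ᶠ[𝓝[Set.Icc a b] x] fun _ => (0:ℝ) := by
          filter_upwards [nhdsWithin_le_nhds (hopen.mem_nhds hxin), self_mem_nhdsWithin]
            with y hy1 hy2 using hval y hy1 hy2
        rw [aux_iDW_congr hev (hval x hxin hx)]
        have hz : iteratedDerivWithin i (fun _ : ℝ => (0:ℝ)) (Set.Icc a b) x = 0 := by
          simp [iteratedDerivWithin_eq_iteratedFDerivWithin,
            iteratedFDerivWithin_zero_fun]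
        rw [hz, abs_zero]
        exact hBnn
      · -- near case
        push_neg at hfar
        have hεpos : 0 < |x - c| := abs_pos.2 (sub_ne_zero.2 hxc)
        set ε : ℝ := |x - c| with hεdef
        obtain ⟨hfin1, hcard1, hlow1⟩ := hLspec ε hεpos (by simp only [hεdef]; linarith)
        obtain ⟨hfin2, hcard2, hlow2⟩ := hLspec (ε / 2) (by linarith) (by linarith)
        set S1 : Finset ℤ := hfin1.toFinset with hS1def
        set S2 : Finset ℤ := hfin2.toFinset with hS2def
        set T : Finset ℤ := Finset.Icc k₀ l ∪ (S1 ∪ S2) with hTdef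
        set E : Finset ℤ := (T.filter fun k => k₀ ≤ k) \ Finset.Icc k₀ l with hEdef
        have hUopen : IsOpen {y : ℝ | ε / 2 < |y - c| ∧ |y - c| < 2 * ε} :=
          (isOpen_lt continuous_const ((continuous_id.sub continuous_const).abs)).inter
            (isOpen_lt ((continuous_id.sub continuous_const).abs) continuous_const)
        have hxU : x ∈ {y : ℝ | ε / 2 < |y - c| ∧ |y - c| < 2 * ε} :=
          ⟨by simp only [hεdef]; linarith, by simp only [hεdef]; linarith⟩
        have hval : ∀ y, (ε / 2 < |y - c| ∧ |y - c| < 2 * ε) → y ∈ Set.Icc a b →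
            h_l y = ∑ k ∈ E, cs k * g k y := by
          rintro y ⟨hy1, hy2⟩ hyJ
          have hfy := aux_hasSum_finset (ψ := fun k => cs k * g k y)
            (hf.sum_eq y hyJ) T ?_
          · have hsubIcc : Finset.Icc k₀ l ⊆ T.filter fun k => k₀ ≤ k := fun k hk =>
              Finset.mem_filter.2 ⟨Finset.mem_union_left _ hk, (Finset.mem_Icc.1 hk).1⟩
            have hsd := Finset.sum_sdiff (f := fun k => cs k * g k y) hsubIcc
            show f y - ∑ k ∈ Finset.Icc k₀ l, cs k * g k y = ∑ k ∈ E, cs k * g k y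
            rw [hfy, ← hsd]
            ring
          · intro k hk hne
            have hne' : g k y ≠ 0 := fun h0 => hne (by simp [h0])
            have hy3 : y ∈ suppOn a b (g k) := subset_closure ⟨hyJ, hne'⟩
            rcases le_or_gt (|y - c|) ε with hle | hgt
            · refine Finset.mem_union_right _ (Finset.mem_union_right _
                (hfin2.mem_toFinset.2 ⟨hk, y, hy3, hyJ, hy1.le, by linarith⟩))
            · refine Finset.mem_union_right _ (Finset.mem_union_left _
                (hfin1.mem_toFinset.2 ⟨hk, y, hy3, hyJ, hgt.le, hy2.le⟩))
        have hES : ∀ k ∈ E, k ∈ S1 ∪ S2 := by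
          intro k hk
          obtain ⟨hk1, hk2⟩ := Finset.mem_sdiff.1 hk
          rcases Finset.mem_union.1 (Finset.mem_filter.1 hk1).1 with h | h
          · exact absurd h hk2
          · exact h
        have hEmem : ∀ k ∈ E, k₀ ≤ k ∧ K ≤ k := by
          intro k hk
          obtain ⟨hk1, hk2⟩ := Finset.mem_sdiff.1 hk
          have hk0 : k₀ ≤ k := (Finset.mem_filter.1 hk1).2
          have hklow : (2:ℝ) ^ (-(k:ℝ) * (L:ℝ)) ≤ ε := by
            rcases Finset.mem_union.1 (hES k hk) with h | h
            · exact hlow1 k hk0 (hfin1.mem_toFinset.1 h).2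
            · exact (hlow2 k hk0 (hfin2.mem_toFinset.1 h).2).trans (by linarith)
          have h6 : (2:ℝ) ^ (-(k:ℝ) * (L:ℝ)) ≤ (2:ℝ) ^ (-(K:ℝ) * (L:ℝ)) :=
            hklow.trans (le_trans hfar.le hε₀le1)
          have h7 : -(k:ℝ) * (L:ℝ) ≤ -(K:ℝ) * (L:ℝ) :=
            (Real.rpow_le_rpow_left_iff (by norm_num : (1:ℝ) < 2)).1 h6
          have h8 : (K:ℝ) ≤ (k:ℝ) := by nlinarith
          exact ⟨hk0, by exact_mod_cast h8⟩
        have hcardE : (E.card : ℝ) ≤ 2 * (L:ℝ) := by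
          have h9 : E ⊆ S1 ∪ S2 := hES
          have h10 : E.card ≤ S1.card + S2.card :=
            (Finset.card_le_card h9).trans (Finset.card_union_le _ _)
          have h11 : S1.card ≤ L := by
            rw [Set.ncard_eq_toFinset_card _ hfin1] at hcard1
            exact hcard1
          have h12 : S2.card ≤ L := by
            rw [Set.ncard_eq_toFinset_card _ hfin2] at hcard2
            exact hcard2
          have : E.card ≤ L + L := h10.trans (Nat.add_le_add h11 h12)
          have : (E.card : ℝ) ≤ (L:ℝ) + (L:ℝ) := by exact_mod_cast this
          linarith
        have hev : h_l =ᶠ[𝓝[Set.Icc a b] x] fun y => ∑ k ∈ E, cs k * g k y := by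
          filter_upwards [nhdsWithin_le_nhds (hUopen.mem_nhds hxU), self_mem_nhdsWithin]
            with y hy1 hy2 using hval y hy1 hy2
        rw [aux_iDW_congr hev (hval x hxU hx)]
        rw [aux_iDW_sum hJ hx E (fun k y => cs k * g k y) (fun k hk =>
          contDiffOn_const.mul ((hf.g_smooth k (hEmem k hk).1).of_le
            (by exact_mod_cast le_top)))]
        refine (Finset.abs_sum_le_sum_abs _ _).trans ?_
        have hterm : ∀ k ∈ E,
            |iteratedDerivWithin i (fun y => cs k * g k y) (Set.Icc a b) x| ≤ δ' := by
          intro k hk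
          obtain ⟨hk0, hkK⟩ := hEmem k hk
          rw [iteratedDerivWithin_const_mul hx hJ (cs k)
            (((hf.g_smooth k hk0).of_le (m := ((i : ℕ∞) : WithTop ℕ∞)) (by exact_mod_cast le_top)) x hx)]
          rw [abs_mul, abs_of_pos (hf.cs_pos k hk0)]
          have h13 : |iteratedDerivWithin i (g k) (Set.Icc a b) x|
              ≤ CrNorm r (g k) (Set.Icc a b) :=
            aux_le_CrNorm hab hi (hf.g_smooth k hk0) hx
          calc cs k * |iteratedDerivWithin i (g k) (Set.Icc a b) x|
              ≤ cs k * CrNorm r (g k) (Set.Icc a b) :=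
                mul_le_mul_of_nonneg_left h13 (hf.cs_pos k hk0).le
            _ = M k := rfl
            _ ≤ δ' := hKle k hkK
        calc ∑ k ∈ E, |iteratedDerivWithin i (fun y => cs k * g k y) (Set.Icc a b) x|
            ≤ ∑ _k ∈ E, δ' := Finset.sum_le_sum hterm
          _ = (E.card : ℝ) * δ' := by rw [Finset.sum_const, nsmul_eq_mul]
          _ ≤ 2 * (L:ℝ) * δ' := mul_le_mul_of_nonneg_right hcardE hδ'pos.le
    -- pointwise bound at c
    have hptc : ∀ i, i ≤ r →
        |iteratedDerivWithin i h_l (Set.Icc a b) c| ≤ 2 * (L:ℝ) * δ' := by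
      intro i hi
      have hcont : ContinuousOn (iteratedDerivWithin i h_l (Set.Icc a b)) (Set.Icc a b) :=
        hsml.continuousOn_iteratedDerivWithin (by exact_mod_cast le_top) hJ
      set P : Set ℝ := Set.Icc a b \ {c} with hPdef
      have hccl : c ∈ closure P := by
        have hsub3 : Set.Ioo a b ⊆ P := fun y hy =>
          ⟨Set.Ioo_subset_Icc_self hy, by
            rcases hc with rfl | rfl
            · exact fun h => absurd (Set.mem_singleton_iff.1 h) (ne_of_gt hy.1)
            · exact fun h => absurd (Set.mem_singleton_iff.1 h) (ne_of_lt hy.2)⟩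
        have h14 : c ∈ closure (Set.Ioo a b) := by
          rw [closure_Ioo hab.ne]; exact hcmem
        exact closure_mono hsub3 h14
      haveI : (𝓝[P] c).NeBot := mem_closure_iff_nhdsWithin_neBot.1 hccl
      have htend : Tendsto (fun y => |iteratedDerivWithin i h_l (Set.Icc a b) y|)
          (𝓝[P] c) (𝓝 |iteratedDerivWithin i h_l (Set.Icc a b) c|) :=
        (continuous_abs.tendsto _).comp ((hcont c hcmem).mono Set.diff_subset)
      refine le_of_tendsto htend ?_
      filter_upwards [self_mem_nhdsWithin] with y hy
      exact hptne i hi y hy.1 (fun h => hy.2 (Set.mem_singleton_iff.2 h))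
    have hpt : ∀ i, i ≤ r → ∀ x ∈ Set.Icc a b,
        |iteratedDerivWithin i h_l (Set.Icc a b) x| ≤ 2 * (L:ℝ) * δ' := by
      intro i hi x hx
      by_cases hxc : x = c
      · subst hxc; exact hptc i hi
      · exact hptne i hi x hx hxc
    show CrNorm r h_l (Set.Icc a b) ≤ δ
    have hfinal : CrNorm r h_l (Set.Icc a b)
        ≤ ∑ _i ∈ Finset.range (r + 1), 2 * (L:ℝ) * δ' := by
      refine Finset.sum_le_sum fun i hi => ?_
      exact ciSup_le fun y => hpt i (Nat.lt_succ_iff.1 (Finset.mem_range.1 hi)) y y.2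
    rw [Finset.sum_const, Finset.card_range, nsmul_eq_mul] at hfinal
    refine hfinal.trans ?_
    push_cast
    have hQδ : Q * δ' = δ := by
      rw [hδ'def]; field_simp
    calc ((r:ℝ) + 1) * (2 * (L:ℝ) * δ') ≤ Q * δ' := by
          rw [hQdef]; nlinarith [hδ'pos.le]
      _ = δ := hQδ
  rw [Metric.tendsto_atTop]
  intro δ hδ
  obtain ⟨N, hN⟩ := key (δ / 2) (by linarith)
  refine ⟨N, fun l hl => ?_⟩
  rw [Real.dist_eq, sub_zero, abs_of_nonneg (hCrnonneg _)]
  have := hN l hl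
  linarith
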